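/- arXiv:1908.04044 — 5 statements merged into one kernel-verified Lean document; each statement's English description precedes it below -/
import Mathlib

section
/- The two groupoid multiplications on Γ satisfy the interchange law of a double groupoid: whenever γ₁,γ₂,γ₃,γ₄ ∈ Γ are such that γ₁ ⋆ γ₂, γ₃ ⋆ γ₄, γ₁·γ₃ and γ₂·γ₄ are all defined, then (γ₁ ⋆ γ₂)·(γ₃ ⋆ γ₄) and (γ₁·γ₃) ⋆ (γ₂·γ₄) are both defined and are equal. -/
/-- the two groupoid multiplications on Γ satisfy the double-groupoid
interchange law: if γ₁ ⋆ γ₂, γ₃ ⋆ γ₄, γ₁·γ₃ and γ₂·γ₄ are defined, then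
(γ₁ ⋆ γ₂)·(γ₃ ⋆ γ₄) and (γ₁·γ₃) ⋆ (γ₂·γ₄) are defined and equal. -/
theorem gamma_interchange_law
    {D : Type*} [Group D] (G Gs : Subgroup D)
    (Γ : Set (D × D × D × D))
    (hΓ : Γ = {p | p.1 ∈ G ∧ p.2.1 ∈ Gs ∧ p.2.2.1 ∈ Gs ∧ p.2.2.2 ∈ G ∧
      p.1 * p.2.1 = p.2.2.1 * p.2.2.2})
    (star dot : D × D × D × D → D × D × D × D → D × D × D × D)
    (hstar : ∀ p q, star p q = (q.1 * p.1, p.2.1, q.2.2.1, q.2.2.2 * p.2.2.2))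
    (hdot : ∀ p q, dot p q = (p.1, p.2.1 * q.2.1, p.2.2.1 * q.2.2.1, q.2.2.2)) :
    ∀ γ₁ ∈ Γ, ∀ γ₂ ∈ Γ, ∀ γ₃ ∈ Γ, ∀ γ₄ ∈ Γ,
      γ₁.2.2.1 = γ₂.2.1 →      -- γ₁ ⋆ γ₂ defined
      γ₃.2.2.1 = γ₄.2.1 →      -- γ₃ ⋆ γ₄ defined
      γ₁.2.2.2 = γ₃.1 →        -- γ₁ · γ₃ defined
      γ₂.2.2.2 = γ₄.1 →        -- γ₂ · γ₄ defined
      (star γ₁ γ₂).2.2.2 = (star γ₃ γ₄).1 ∧        -- (γ₁⋆γ₂)·(γ₃⋆γ₄) defined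
      (dot γ₁ γ₃).2.2.1 = (dot γ₂ γ₄).2.1 ∧        -- (γ₁·γ₃)⋆(γ₂·γ₄) defined
      dot (star γ₁ γ₂) (star γ₃ γ₄) = star (dot γ₁ γ₃) (dot γ₂ γ₄) := by
  intro γ₁ _ γ₂ _ γ₃ _ γ₄ _ h12 h34 h13 h24
  refine ⟨?_, ?_, ?_⟩ <;> simp [hstar, hdot, h12, h34, h13, h24]
end

section
/- For γ = (g,u,u',g') ∈ Γ, the set S_γ = {(hg, u, h[u'], h^{u'}g') : h ∈ G} is contained in Γ, contains γ, and is a global bisection of the groupoid Γ over G: the source map θ_G(g,u,u',g') = g restricts to a bijection S_γ → G, and the target map τ_G(g,u,u',g') = g' restricts to a bijection S_γ → G. -/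
/-- for γ = (g,u,u',g') ∈ Γ, the set
S_γ = {(hg, u, h[u'], h^{u'}g') : h ∈ G} is contained in Γ, contains γ, and is a
global bisection of the groupoid Γ over G: the source θ_G(g,u,u',g') = g and the
target τ_G(g,u,u',g') = g' both restrict to bijections S_γ → G. Here hv = h[v]·h^v
with h[v] ∈ G*, h^v ∈ G, in the complete case. -/
theorem bisection_S_gamma
    {D : Type*} [Group D] (G Gs : Subgroup D)
    (hex1 : ∀ d : D, ∃ g ∈ G, ∃ u ∈ Gs, d = g * u)
    (huniq1 : ∀ g₁ g₂ u₁ u₂ : D, g₁ ∈ G → g₂ ∈ G → u₁ ∈ Gs → u₂ ∈ Gs →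
      g₁ * u₁ = g₂ * u₂ → g₁ = g₂ ∧ u₁ = u₂)
    (hex2 : ∀ d : D, ∃ u ∈ Gs, ∃ g ∈ G, d = u * g)
    (huniq2 : ∀ u₁ u₂ g₁ g₂ : D, u₁ ∈ Gs → u₂ ∈ Gs → g₁ ∈ G → g₂ ∈ G →
      u₁ * g₁ = u₂ * g₂ → u₁ = u₂ ∧ g₁ = g₂)
    -- c h v = h[v] ∈ G*,  d h v = h^v ∈ G, defined by h·v = h[v]·h^v
    (c d : D → D → D)
    (hcd : ∀ h ∈ G, ∀ v ∈ Gs, c h v ∈ Gs ∧ d h v ∈ G ∧ h * v = c h v * d h v)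
    (Γ : Set (D × D × D × D))
    (hΓ : Γ = {p | p.1 ∈ G ∧ p.2.1 ∈ Gs ∧ p.2.2.1 ∈ Gs ∧ p.2.2.2 ∈ G ∧
      p.1 * p.2.1 = p.2.2.1 * p.2.2.2})
    (γ : D × D × D × D) (hγ : γ ∈ Γ)
    (S : Set (D × D × D × D))
    (hS : S = {p | ∃ h ∈ G,
      p = (h * γ.1, γ.2.1, c h γ.2.2.1, d h γ.2.2.1 * γ.2.2.2)}) :
    S ⊆ Γ ∧ γ ∈ S ∧
    Set.BijOn (fun p => p.1) S (G : Set D) ∧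
    Set.BijOn (fun p => p.2.2.2) S (G : Set D) := by

  obtain ⟨g, u, u', g'⟩ := γ
  rw [hΓ] at hγ
  obtain ⟨hg, hu, hu', hg', heq⟩ := hγ
  simp only at hg hu hu' hg' heq
  subst hS hΓ
  -- key facts
  have key : ∀ h ∈ G, c h u' ∈ Gs ∧ d h u' ∈ G ∧ h * u' = c h u' * d h u' :=
    fun h hh => hcd h hh u' hu'
  constructor
  · rintro p ⟨h, hh, rfl⟩
    obtain ⟨hc, hd, he⟩ := key h hh
    refine ⟨G.mul_mem hh hg, hu, hc, G.mul_mem hd hg', ?_⟩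
    simp only
    calc h * g * u = h * (g * u) := by group
      _ = h * (u' * g') := by rw [heq]
      _ = (h * u') * g' := by group
      _ = (c h u' * d h u') * g' := by rw [he]
      _ = c h u' * (d h u' * g') := by group
  constructor
  · refine ⟨1, G.one_mem, ?_⟩
    obtain ⟨hc, hd, he⟩ := key 1 G.one_mem
    have : u' * 1 = c 1 u' * d 1 u' := by rw [← he]; group
    obtain ⟨h1, h2⟩ := huniq2 u' (c 1 u') 1 (d 1 u') hu' hc G.one_mem hd this
    simp [← h1, ← h2]
  constructor
  · refine ⟨?_, ?_, ?_⟩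
    · rintro p ⟨h, hh, rfl⟩; exact G.mul_mem hh hg
    · rintro p ⟨h1, hh1, rfl⟩ q ⟨h2, hh2, rfl⟩ hpq
      simp only at hpq
      have : h1 = h2 := mul_right_cancel hpq
      rw [this]
    · intro a ha
      refine ⟨(a * g⁻¹ * g, u, c (a*g⁻¹) u', d (a*g⁻¹) u' * g'),
        ⟨a * g⁻¹, G.mul_mem ha (G.inv_mem hg), rfl⟩, ?_⟩
      simp
  · refine ⟨?_, ?_, ?_⟩
    · rintro p ⟨h, hh, rfl⟩
      exact G.mul_mem (key h hh).2.1 hg'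
    · rintro p ⟨h1, hh1, rfl⟩ q ⟨h2, hh2, rfl⟩ hpq
      simp only at hpq
      have hd12 : d h1 u' = d h2 u' := mul_right_cancel hpq
      obtain ⟨hc1, hd1, he1⟩ := key h1 hh1
      obtain ⟨hc2, hd2, he2⟩ := key h2 hh2
      -- h1⁻¹ * c h1 u' = u' * (d h1 u')⁻¹ = h2⁻¹ * c h2 u'
      have e1 : h1⁻¹ * c h1 u' = u' * (d h1 u')⁻¹ := by
        calc h1⁻¹ * c h1 u' = h1⁻¹ * (c h1 u' * d h1 u') * (d h1 u')⁻¹ := by group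
          _ = h1⁻¹ * (h1 * u') * (d h1 u')⁻¹ := by rw [← he1]
          _ = u' * (d h1 u')⁻¹ := by group
      have e2 : h2⁻¹ * c h2 u' = u' * (d h2 u')⁻¹ := by
        calc h2⁻¹ * c h2 u' = h2⁻¹ * (c h2 u' * d h2 u') * (d h2 u')⁻¹ := by group
          _ = h2⁻¹ * (h2 * u') * (d h2 u')⁻¹ := by rw [← he2]
          _ = u' * (d h2 u')⁻¹ := by group
      have : h1⁻¹ * c h1 u' = h2⁻¹ * c h2 u' := by rw [e1, e2, hd12]
      obtain ⟨hi, _⟩ := huniq1 h1⁻¹ h2⁻¹ (c h1 u') (c h2 u') (G.inv_mem hh1)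
        (G.inv_mem hh2) hc1 hc2 this
      have : h1 = h2 := inv_injective hi
      rw [this]
    · intro a ha
      set b := a * g'⁻¹ with hb
      have hbG : b ∈ G := G.mul_mem ha (G.inv_mem hg')
      obtain ⟨g₀, hg₀, v₀, hv₀, hfac⟩ := hex1 (u' * b⁻¹)
      set h := g₀⁻¹ with hhdef
      have hhG : h ∈ G := G.inv_mem hg₀
      have hhu : h * u' = v₀ * b := by
        rw [hhdef]
        have : v₀ = g₀⁻¹ * u' * b⁻¹ := by
          rw [mul_assoc, hfac]; group
        rw [this]; group
      obtain ⟨hc, hd, he⟩ := key h hhG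
      have : c h u' * d h u' = v₀ * b := by rw [← he, hhu]
      obtain ⟨_, hdb⟩ := huniq2 (c h u') v₀ (d h u') b hc hv₀ hd hbG this
      refine ⟨(h * g, u, c h u', d h u' * g'), ⟨h, hhG, rfl⟩, ?_⟩
      simp only [hdb, hb]; group
end

section
/- The twisted multiplication on A ⊗ B defined by (a₁ ⊗ b₁)·(a₂ ⊗ b₂) = Σᵢ a₁(Yᵢ · a₂) ⊗ (Xᵢ · b₁)b₂, where R = Σᵢ Xᵢ ⊗ Yᵢ, is associative, and 1_A ⊗ 1_B is a two-sided unit for it. -/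
open TensorProduct


noncomputable def phiAux {k H A B : Type*} [CommRing k]
    [AddCommGroup H] [Module k H]
    [Ring A] [Algebra k A] [Ring B] [Algebra k B]
    (actA : H →ₗ[k] A →ₗ[k] A) (actB : H →ₗ[k] B →ₗ[k] B)
    (c a₃ : A) (b b₂ b₃ : B) : (H ⊗[k] H) ⊗[k] H →ₗ[k] A ⊗[k] B :=
  (TensorProduct.comm k B A).toLinearMap ∘ₗ
    TensorProduct.map
      (TensorProduct.lift
        (((LinearMap.mul k B).compl₁₂ (actB.flip b) (actB.flip b₂)).compr₂
          (LinearMap.mulRight k b₃)))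
      ((LinearMap.mulLeft k c) ∘ₗ actA.flip a₃)

lemma phiAux_tmul {k H A B : Type*} [CommRing k]
    [AddCommGroup H] [Module k H]
    [Ring A] [Algebra k A] [Ring B] [Algebra k B]
    (actA : H →ₗ[k] A →ₗ[k] A) (actB : H →ₗ[k] B →ₗ[k] B)
    (c a₃ : A) (b b₂ b₃ : B) (u v w : H) :
    phiAux actA actB c a₃ b b₂ b₃ ((u ⊗ₜ[k] v) ⊗ₜ[k] w)
      = (c * actA w a₃) ⊗ₜ[k] (actB u b * actB v b₂ * b₃) := by
  simp [phiAux]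

noncomputable def psiAux {k H A B : Type*} [CommRing k]
    [AddCommGroup H] [Module k H]
    [Ring A] [Algebra k A] [Ring B] [Algebra k B]
    (actA : H →ₗ[k] A →ₗ[k] A) (actB : H →ₗ[k] B →ₗ[k] B)
    (a₁ a₂ aa : A) (b₁ d : B) : H ⊗[k] (H ⊗[k] H) →ₗ[k] A ⊗[k] B :=
  (TensorProduct.comm k B A).toLinearMap ∘ₗ
    TensorProduct.map
      ((LinearMap.mulRight k d) ∘ₗ actB.flip b₁)
      (TensorProduct.lift
        (((LinearMap.mul k A).compl₁₂ (actA.flip a₂) (actA.flip aa)).compr₂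
          (LinearMap.mulLeft k a₁)))

lemma psiAux_tmul {k H A B : Type*} [CommRing k]
    [AddCommGroup H] [Module k H]
    [Ring A] [Algebra k A] [Ring B] [Algebra k B]
    (actA : H →ₗ[k] A →ₗ[k] A) (actB : H →ₗ[k] B →ₗ[k] B)
    (a₁ a₂ aa : A) (b₁ d : B) (u v w : H) :
    psiAux actA actB a₁ a₂ aa b₁ d (u ⊗ₜ[k] (v ⊗ₜ[k] w))
      = (a₁ * (actA v a₂ * actA w aa)) ⊗ₜ[k] (actB u b₁ * d) := by
  simp [psiAux]

lemma sum_rot {ι M : Type*} [AddCommMonoid M] (s : Finset ι) (f : ι → ι → ι → M) :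
    ∑ i ∈ s, ∑ p ∈ s, ∑ q ∈ s, f i p q = ∑ j ∈ s, ∑ p ∈ s, ∑ q ∈ s, f q p j := by
  have h1 : ∑ i ∈ s, ∑ p ∈ s, ∑ q ∈ s, f i p q
      = ∑ q ∈ s, ∑ i ∈ s, ∑ p ∈ s, f i p q :=
    (Finset.sum_congr rfl fun i _ => Finset.sum_comm).trans Finset.sum_comm
  have h2 : ∑ j ∈ s, ∑ p ∈ s, ∑ q ∈ s, f q p j
      = ∑ j ∈ s, ∑ q ∈ s, ∑ p ∈ s, f q p j :=
    Finset.sum_congr rfl fun j _ => Finset.sum_comm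
  rw [h1, h2]


/-- for a bialgebra H over k with R = Σᵢ Xᵢ ⊗ Yᵢ ∈ H ⊗ H satisfying
(Δ⊗id)R = R₁₃R₂₃, (id⊗Δ)R = R₁₃R₁₂, (ε⊗id)R = 1 = (id⊗ε)R, and H-module algebras
A and B, the twisted multiplication on A ⊗ B given by
(a₁ ⊗ b₁)·(a₂ ⊗ b₂) = Σᵢ a₁(Yᵢ·a₂) ⊗ (Xᵢ·b₁)b₂ is associative with two-sided unit
1_A ⊗ 1_B. -/
theorem twisted_tensor_product_associative
    {k : Type*} [CommRing k]
    {H : Type*} [Ring H] [Bialgebra k H]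
    {A : Type*} [Ring A] [Algebra k A]
    {B : Type*} [Ring B] [Algebra k B]
    {ι : Type*} (s : Finset ι) (X Y : ι → H)
    -- (Δ ⊗ id)(R) = R₁₃R₂₃   (in (H ⊗ H) ⊗ H)
    (hR1 : ∑ i ∈ s, (Coalgebra.comul (R := k) (X i)) ⊗ₜ[k] (Y i)
      = ∑ i ∈ s, ∑ j ∈ s, ((X i) ⊗ₜ[k] (X j)) ⊗ₜ[k] (Y i * Y j))
    -- (id ⊗ Δ)(R) = R₁₃R₁₂   (in H ⊗ (H ⊗ H))
    (hR2 : ∑ i ∈ s, (X i) ⊗ₜ[k] (Coalgebra.comul (R := k) (Y i))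
      = ∑ i ∈ s, ∑ j ∈ s, ((X i) * (X j)) ⊗ₜ[k] ((Y j) ⊗ₜ[k] (Y i)))
    -- (ε ⊗ id)(R) = 1 = (id ⊗ ε)(R)
    (hR3 : ∑ i ∈ s, (Coalgebra.counit (R := k) (X i)) • (Y i) = (1 : H))
    (hR4 : ∑ i ∈ s, (Coalgebra.counit (R := k) (Y i)) • (X i) = (1 : H))
    -- A is a left H-module algebra via actA
    (actA : H →ₗ[k] A →ₗ[k] A)
    (hAone : ∀ a : A, actA 1 a = a)
    (hAmul : ∀ (h h' : H) (a : A), actA (h * h') a = actA h (actA h' a))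
    (hAalg : ∀ (h : H) (a a' : A), actA h (a * a') =
      LinearMap.mul' k A
        ((TensorProduct.homTensorHomMap (RingHom.id k) A A A A)
          ((TensorProduct.map actA actA) (Coalgebra.comul (R := k) h)) (a ⊗ₜ[k] a')))
    (hAunit : ∀ h : H, actA h (1 : A) = (Coalgebra.counit (R := k) h) • (1 : A))
    -- B is a left H-module algebra via actB
    (actB : H →ₗ[k] B →ₗ[k] B)
    (hBone : ∀ b : B, actB 1 b = b)
    (hBmul : ∀ (h h' : H) (b : B), actB (h * h') b = actB h (actB h' b))
    (hBalg : ∀ (h : H) (b b' : B), actB h (b * b') =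
      LinearMap.mul' k B
        ((TensorProduct.homTensorHomMap (RingHom.id k) B B B B)
          ((TensorProduct.map actB actB) (Coalgebra.comul (R := k) h)) (b ⊗ₜ[k] b')))
    (hBunit : ∀ h : H, actB h (1 : B) = (Coalgebra.counit (R := k) h) • (1 : B))
    -- the twisted multiplication on A ⊗ B
    (m : A ⊗[k] B →ₗ[k] A ⊗[k] B →ₗ[k] A ⊗[k] B)
    (hm : ∀ (a₁ a₂ : A) (b₁ b₂ : B),
      m (a₁ ⊗ₜ[k] b₁) (a₂ ⊗ₜ[k] b₂)
        = ∑ i ∈ s, (a₁ * actA (Y i) a₂) ⊗ₜ[k] (actB (X i) b₁ * b₂)) :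
    (∀ x y z : A ⊗[k] B, m (m x y) z = m x (m y z)) ∧
    (∀ x : A ⊗[k] B, m ((1 : A) ⊗ₜ[k] (1 : B)) x = x ∧ m x ((1 : A) ⊗ₜ[k] (1 : B)) = x) := by
  have key : ∀ (a₁ a₂ a₃ : A) (b₁ b₂ b₃ : B),
      m (m (a₁ ⊗ₜ[k] b₁) (a₂ ⊗ₜ[k] b₂)) (a₃ ⊗ₜ[k] b₃)
        = m (a₁ ⊗ₜ[k] b₁) (m (a₂ ⊗ₜ[k] b₂) (a₃ ⊗ₜ[k] b₃)) := by
    intro a₁ a₂ a₃ b₁ b₂ b₃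
    have stepA : m (m (a₁ ⊗ₜ[k] b₁) (a₂ ⊗ₜ[k] b₂)) (a₃ ⊗ₜ[k] b₃)
        = ∑ i ∈ s, phiAux actA actB (a₁ * actA (Y i) a₂) a₃ (actB (X i) b₁) b₂ b₃
            (∑ j ∈ s, (Coalgebra.comul (R := k) (X j)) ⊗ₜ[k] (Y j)) := by
      rw [hm, map_sum, LinearMap.sum_apply]
      refine Finset.sum_congr rfl fun i _ => ?_
      rw [hm, map_sum]
      refine Finset.sum_congr rfl fun j _ => ?_
      rw [hBalg]
      generalize (Coalgebra.comul (R := k) (X j)) = q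
      induction q using TensorProduct.induction_on with
      | zero => simp
      | tmul u v => simp [phiAux_tmul]
      | add q q' h h' =>
        simp only [map_add, TensorProduct.add_tmul, TensorProduct.tmul_add,
          LinearMap.add_apply, add_mul] at h h' ⊢
        rw [h, h']
    have stepB : m (a₁ ⊗ₜ[k] b₁) (m (a₂ ⊗ₜ[k] b₂) (a₃ ⊗ₜ[k] b₃))
        = ∑ j ∈ s, psiAux actA actB a₁ a₂ (actA (Y j) a₃) b₁ (actB (X j) b₂ * b₃)
            (∑ i ∈ s, (X i) ⊗ₜ[k] (Coalgebra.comul (R := k) (Y i))) := by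
      rw [hm (a₂) (a₃), map_sum]
      refine Finset.sum_congr rfl fun j _ => ?_
      rw [hm, map_sum]
      refine Finset.sum_congr rfl fun i _ => ?_
      rw [hAalg]
      generalize (Coalgebra.comul (R := k) (Y i)) = q
      induction q using TensorProduct.induction_on with
      | zero => simp
      | tmul v w => simp [psiAux_tmul]
      | add q q' h h' =>
        simp only [map_add, TensorProduct.add_tmul, TensorProduct.tmul_add,
          LinearMap.add_apply, mul_add] at h h' ⊢
        rw [h, h']
    have stepC : ∑ i ∈ s, phiAux actA actB (a₁ * actA (Y i) a₂) a₃ (actB (X i) b₁) b₂ b₃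
            (∑ p ∈ s, ∑ q ∈ s, ((X p) ⊗ₜ[k] (X q)) ⊗ₜ[k] (Y p * Y q))
        = ∑ j ∈ s, psiAux actA actB a₁ a₂ (actA (Y j) a₃) b₁ (actB (X j) b₂ * b₃)
            (∑ p ∈ s, ∑ q ∈ s, ((X p) * (X q)) ⊗ₜ[k] ((Y q) ⊗ₜ[k] (Y p))) := by
      simp only [map_sum, phiAux_tmul, psiAux_tmul, hAmul, hBmul, mul_assoc]
      exact sum_rot s fun i p q =>
        (a₁ * (actA (Y i) a₂ * actA (Y p) (actA (Y q) a₃))) ⊗ₜ[k]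
          (actB (X p) (actB (X i) b₁) * (actB (X q) b₂ * b₃))
    calc m (m (a₁ ⊗ₜ[k] b₁) (a₂ ⊗ₜ[k] b₂)) (a₃ ⊗ₜ[k] b₃)
        = ∑ i ∈ s, phiAux actA actB (a₁ * actA (Y i) a₂) a₃ (actB (X i) b₁) b₂ b₃
            (∑ j ∈ s, (Coalgebra.comul (R := k) (X j)) ⊗ₜ[k] (Y j)) := stepA
      _ = ∑ i ∈ s, phiAux actA actB (a₁ * actA (Y i) a₂) a₃ (actB (X i) b₁) b₂ b₃
            (∑ p ∈ s, ∑ q ∈ s, ((X p) ⊗ₜ[k] (X q)) ⊗ₜ[k] (Y p * Y q)) := by rw [hR1]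
      _ = ∑ j ∈ s, psiAux actA actB a₁ a₂ (actA (Y j) a₃) b₁ (actB (X j) b₂ * b₃)
            (∑ p ∈ s, ∑ q ∈ s, ((X p) * (X q)) ⊗ₜ[k] ((Y q) ⊗ₜ[k] (Y p))) := stepC
      _ = ∑ j ∈ s, psiAux actA actB a₁ a₂ (actA (Y j) a₃) b₁ (actB (X j) b₂ * b₃)
            (∑ i ∈ s, (X i) ⊗ₜ[k] (Coalgebra.comul (R := k) (Y i))) := by rw [← hR2]
      _ = m (a₁ ⊗ₜ[k] b₁) (m (a₂ ⊗ₜ[k] b₂) (a₃ ⊗ₜ[k] b₃)) := stepB.symm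
  have unitL : ∀ (a : A) (b : B), m ((1:A) ⊗ₜ[k] (1:B)) (a ⊗ₜ[k] b) = a ⊗ₜ[k] b := by
    intro a b
    have h3 : ∑ i ∈ s, (Coalgebra.counit (R := k) (X i)) • actA (Y i) a = a := by
      have := congrArg (fun h : H => actA h a) hR3
      simpa [map_sum, LinearMap.sum_apply, LinearMap.smul_apply, hAone] using this
    rw [hm]
    simp only [one_mul, hBunit, smul_mul_assoc, one_mul, TensorProduct.tmul_smul]
    simp only [TensorProduct.smul_tmul']
    rw [← TensorProduct.sum_tmul, h3]
  have unitR : ∀ (a : A) (b : B), m (a ⊗ₜ[k] b) ((1:A) ⊗ₜ[k] (1:B)) = a ⊗ₜ[k] b := by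
    intro a b
    have h4 : ∑ i ∈ s, (Coalgebra.counit (R := k) (Y i)) • actB (X i) b = b := by
      have := congrArg (fun h : H => actB h b) hR4
      simpa [map_sum, LinearMap.sum_apply, LinearMap.smul_apply, hBone] using this
    rw [hm]
    simp only [hAunit, mul_smul_comm, mul_one]
    simp only [TensorProduct.smul_tmul]
    rw [← TensorProduct.tmul_sum, h4]
  constructor
  · intro x y z
    induction x using TensorProduct.induction_on with
    | zero => simp
    | add x x' hx hx' => simp [map_add, LinearMap.add_apply, hx, hx']
    | tmul a₁ b₁ =>
      induction y using TensorProduct.induction_on with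
      | zero => simp
      | add y y' hy hy' => simp [map_add, LinearMap.add_apply, hy, hy']
      | tmul a₂ b₂ =>
        induction z using TensorProduct.induction_on with
        | zero => simp
        | add z z' hz hz' => simp [map_add, LinearMap.add_apply, hz, hz']
        | tmul a₃ b₃ => exact key a₁ a₂ a₃ b₁ b₂ b₃
  · intro x
    induction x using TensorProduct.induction_on with
    | zero => simp
    | add x x' hx hx' =>
      exact ⟨by simp [map_add, LinearMap.add_apply, hx.1, hx'.1],
             by simp [map_add, LinearMap.add_apply, hx.2, hx'.2]⟩
    | tmul a b => exact ⟨unitL a b, unitR a b⟩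
end

section
/- The binary operation on Y × Z defined by (y₁, z₁) * (y₂, z₂) = ( y₁ · (μ_Z(z₁) ▷ y₂), (z₁ ◁ μ_Y(y₂)) · z₂ ) is associative. -/
/-- with twisted-multiplicative actions ▷ of G* on Y and ◁ of G on Z
over moment homomorphisms μ_Y : Y → G, μ_Z : Z → G*, the binary operation
(y₁, z₁) * (y₂, z₂) = (y₁·(μ_Z(z₁) ▷ y₂), (z₁ ◁ μ_Y(y₂))·z₂) on Y × Z is associative. -/
theorem twisted_product_associative
    {D : Type*} [Group D] (G Gs : Subgroup D)
    (hex1 : ∀ d : D, ∃ g ∈ G, ∃ u ∈ Gs, d = g * u)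
    (huniq1 : ∀ g₁ g₂ u₁ u₂ : D, g₁ ∈ G → g₂ ∈ G → u₁ ∈ Gs → u₂ ∈ Gs →
      g₁ * u₁ = g₂ * u₂ → g₁ = g₂ ∧ u₁ = u₂)
    (hex2 : ∀ d : D, ∃ u ∈ Gs, ∃ g ∈ G, d = u * g)
    (huniq2 : ∀ u₁ u₂ g₁ g₂ : D, u₁ ∈ Gs → u₂ ∈ Gs → g₁ ∈ G → g₂ ∈ G →
      u₁ * g₁ = u₂ * g₂ → u₁ = u₂ ∧ g₁ = g₂)
    -- a u g = u[g] ∈ G,  b u g = u^g ∈ G*, defined by u·g = u[g]·u^g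
    (a b : D → D → D)
    (hab : ∀ u ∈ Gs, ∀ g ∈ G, a u g ∈ G ∧ b u g ∈ Gs ∧ u * g = a u g * b u g)
    {Y Z : Type*} [Group Y] [Group Z]
    (μY : Y →* D) (hμY : ∀ y, μY y ∈ G)
    (μZ : Z →* D) (hμZ : ∀ z, μZ z ∈ Gs)
    -- left action ▷ of G* on Y
    (act : D → Y → Y)
    (hact_one : ∀ y, act 1 y = y)
    (hact_mul : ∀ u ∈ Gs, ∀ v ∈ Gs, ∀ y, act (u * v) y = act u (act v y))
    (hact_mom : ∀ u ∈ Gs, ∀ y, μY (act u y) = a u (μY y))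
    (hact_tw : ∀ u ∈ Gs, ∀ y₁ y₂ : Y,
      act u (y₁ * y₂) = act u y₁ * act (b u (μY y₁)) y₂)
    -- right action ◁ of G on Z
    (ract : Z → D → Z)
    (hract_one : ∀ z, ract z 1 = z)
    (hract_mul : ∀ g ∈ G, ∀ h ∈ G, ∀ z, ract z (g * h) = ract (ract z g) h)
    (hract_mom : ∀ g ∈ G, ∀ z, μZ (ract z g) = b (μZ z) g)
    (hract_tw : ∀ g ∈ G, ∀ z₁ z₂ : Z,
      ract (z₁ * z₂) g = ract z₁ (a (μZ z₂) g) * ract z₂ g)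
    -- the binary operation on Y × Z
    (op : Y × Z → Y × Z → Y × Z)
    (hop : ∀ p q, op p q = (p.1 * act (μZ p.2) q.1, ract p.2 (μY q.1) * q.2)) :
    ∀ p q r : Y × Z, op (op p q) r = op p (op q r) := by
  rintro ⟨y₁, z₁⟩ ⟨y₂, z₂⟩ ⟨y₃, z₃⟩
  simp only [hop]
  have hbmem : ∀ u ∈ Gs, ∀ g ∈ G, b u g ∈ Gs := fun u hu g hg => (hab u hu g hg).2.1
  have hamem : ∀ u ∈ Gs, ∀ g ∈ G, a u g ∈ G := fun u hu g hg => (hab u hu g hg).1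
  refine Prod.ext ?_ ?_
  · show (y₁ * act (μZ z₁) y₂) * act (μZ (ract z₁ (μY y₂) * z₂)) y₃
      = y₁ * act (μZ z₁) (y₂ * act (μZ z₂) y₃)
    rw [map_mul, hract_mom (μY y₂) (hμY y₂) z₁,
      hact_mul _ (hbmem _ (hμZ z₁) _ (hμY y₂)) _ (hμZ z₂),
      hact_tw _ (hμZ z₁), mul_assoc]
  · show ract (ract z₁ (μY y₂) * z₂) (μY y₃) * z₃
      = ract z₁ (μY (y₂ * act (μZ z₂) y₃)) * (ract z₂ (μY y₃) * z₃)
    rw [hract_tw _ (hμY y₃), map_mul, hact_mom _ (hμZ z₂),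
      hract_mul _ (hμY y₂) _ (hamem _ (hμZ z₂) _ (hμY y₃)), mul_assoc]
end

section
/- The intersection of the images B̄ and B̿₋ in D = G × T equals the diagonal copy of the 2-torsion of T: B̄ ∩ B̿₋ = {(t, t) : t ∈ T, t² = e}. -/
/-- in D = G × T, the images B̄ = {(hn, h) : h ∈ T, n ∈ N} and
B̿₋ = {(mh, h⁻¹) : m ∈ N₋, h ∈ T} intersect exactly in the diagonal copy of the
2-torsion of T: B̄ ∩ B̿₋ = {(t,t) : t ∈ T, t² = e}. -/
theorem Bbar_inter_Bbbar
    {G : Type*} [Group G] (T N Nm B Bm : Subgroup G)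
    (hTN : T ⊓ N = ⊥) (hTNm : T ⊓ Nm = ⊥)
    (hB : (B : Set G) = {x | ∃ t ∈ T, ∃ n ∈ N, x = t * n})
    (hBm : (Bm : Set G) = {x | ∃ m ∈ Nm, ∃ t ∈ T, x = m * t})
    (hBBm : B ⊓ Bm = T)
    (Bbar Bmbar : Set (G × G))
    (hBbar : Bbar = {p | ∃ h ∈ T, ∃ n ∈ N, p = (h * n, h)})
    (hBmbar : Bmbar = {p | ∃ m ∈ Nm, ∃ h ∈ T, p = (m * h, h⁻¹)}) :
    Bbar ∩ Bmbar = {p | ∃ t ∈ T, t * t = 1 ∧ p = (t, t)} := by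
  subst hBbar hBmbar
  ext p
  constructor
  · rintro ⟨⟨h, hhT, n, hnN, rfl⟩, ⟨m, hmN, h', hhT', heq⟩⟩
    have h2 : h = h'⁻¹ := (Prod.ext_iff.mp heq).2
    have h1 : h * n = m * h' := (Prod.ext_iff.mp heq).1
    -- x := h * n is in B and in Bm
    have hxB : h * n ∈ B := by
      rw [SetLike.mem_coe.symm, hB]; exact ⟨h, hhT, n, hnN, rfl⟩
    have hxBm : h * n ∈ Bm := by
      rw [SetLike.mem_coe.symm, hBm]; exact ⟨m, hmN, h', hhT', h1⟩
    have hxT : h * n ∈ T := by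
      rw [← hBBm]; exact ⟨hxB, hxBm⟩
    have hnT : n ∈ T := by
      have : n = h⁻¹ * (h * n) := by group
      rw [this]; exact mul_mem (inv_mem hhT) hxT
    have hn1 : n = 1 := by
      have : n ∈ T ⊓ N := ⟨hnT, hnN⟩
      rw [hTN] at this; exact this
    subst hn1
    have hx : h * 1 = h := mul_one h
    have hmT : m ∈ T := by
      have : m = (h * 1) * h'⁻¹ := by rw [h1]; group
      rw [this, hx, ← h2]; exact mul_mem hhT hhT
    have hm1 : m = 1 := by
      have : m ∈ T ⊓ Nm := ⟨hmT, hmN⟩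
      rw [hTNm] at this; exact this
    subst hm1
    have hhh : h * h = 1 := by
      have : h * 1 = 1 * h' := h1
      rw [h2, mul_one, one_mul] at this
      rw [h2, this]; nth_rewrite 1 [← this]; exact inv_mul_cancel h'
    exact ⟨h, hhT, hhh, by rw [hx]⟩
  · rintro ⟨t, htT, htt, rfl⟩
    have hinv : t⁻¹ = t := by
      rw [inv_eq_iff_mul_eq_one]; exact htt
    refine ⟨⟨t, htT, 1, one_mem N, by rw [mul_one]⟩,
      ⟨1, one_mem Nm, t⁻¹, inv_mem htT, ?_⟩⟩
    rw [one_mul, inv_inv, hinv]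
end
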